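/- Let 0 < π < π̂ ≤ 1 be real numbers. Then −π̂·log π − log 2 < KL(π̂‖π) ≤ −π̂·log π, where the right inequality is strict whenever π̂ < 1 and is an equality when π̂ = 1. -/

import Mathlib

/-- KL divergence between Bernoulli distributions (with `0 · log 0 = 0`, which holds
automatically since `Real.log 0 = 0`). -/
noncomputable def klBer (p1 p2 : ℝ) : ℝ :=
  p1 * Real.log (p1 / p2) + (1 - p1) * Real.log ((1 - p1) / (1 - p2))

lemma entropy_ge (x : ℝ) (hx : 0 < x) (hx1 : x < 1) :
    -Real.log 2 ≤ x * Real.log x + (1 - x) * Real.log (1 - x) := by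
  have hx1' : 0 < 1 - x := by linarith
  have h1 : Real.log (1 / (2 * x)) ≤ 1 / (2 * x) - 1 :=
    Real.log_le_sub_one_of_pos (by positivity)
  have h2 : Real.log (1 / (2 * (1 - x))) ≤ 1 / (2 * (1 - x)) - 1 :=
    Real.log_le_sub_one_of_pos (by positivity)
  have e1 : Real.log (1 / (2 * x)) = -(Real.log 2 + Real.log x) := by
    rw [Real.log_div one_ne_zero (by positivity), Real.log_mul two_ne_zero hx.ne',
      Real.log_one]; ring
  have e2 : Real.log (1 / (2 * (1 - x))) = -(Real.log 2 + Real.log (1 - x)) := by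
    rw [Real.log_div one_ne_zero (by positivity), Real.log_mul two_ne_zero hx1'.ne',
      Real.log_one]; ring
  rw [e1] at h1
  rw [e2] at h2
  have d1 : x * (1 / (2 * x)) = 1 / 2 := by field_simp
  have d2 : (1 - x) * (1 / (2 * (1 - x))) = 1 / 2 := by field_simp
  nlinarith [mul_le_mul_of_nonneg_left h1 hx.le, mul_le_mul_of_nonneg_left h2 hx1'.le]

/-- for `0 < p < ph ≤ 1`,
`−ph·log p − log 2 < KL(ph‖p) ≤ −ph·log p`, with the right inequality strict when
`ph < 1` and an equality when `ph = 1`. -/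
theorem stmt7 (p ph : ℝ) (h0 : 0 < p) (h1 : p < ph) (h2 : ph ≤ 1) :
    (-ph * Real.log p - Real.log 2 < klBer ph p) ∧
    (klBer ph p ≤ -ph * Real.log p) ∧
    (ph < 1 → klBer ph p < -ph * Real.log p) ∧
    (ph = 1 → klBer ph p = -ph * Real.log p) := by
  have hph : 0 < ph := lt_trans h0 h1
  have hlog2 : 0 < Real.log 2 := Real.log_pos (by norm_num)
  rcases eq_or_lt_of_le h2 with heq | hlt
  · -- ph = 1
    subst heq
    have hval : klBer 1 p = -Real.log p := by
      simp only [klBer, sub_self, zero_mul, add_zero, one_mul,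
        Real.log_div one_ne_zero h0.ne', Real.log_one]
      ring
    refine ⟨?_, ?_, ?_, ?_⟩
    · rw [hval]; linarith
    · rw [hval]; linarith
    · intro h; exact absurd rfl h.ne
    · intro _; rw [hval]; ring
  · -- ph < 1
    have hph1 : 0 < 1 - ph := by linarith
    have hp1 : 0 < 1 - p := by linarith
    have hval : klBer ph p =
        ph * Real.log ph - ph * Real.log p
          + (1 - ph) * (Real.log (1 - ph) - Real.log (1 - p)) := by
      simp only [klBer, Real.log_div hph.ne' h0.ne',
        Real.log_div hph1.ne' hp1.ne']
      ring
    have hlogph : Real.log ph < 0 := Real.log_neg hph hlt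
    have hlogr : Real.log (1 - ph) - Real.log (1 - p) < 0 := by
      have := Real.log_lt_log hph1 (by linarith : (1 : ℝ) - ph < 1 - p)
      linarith
    have hlogp1 : Real.log (1 - p) < 0 := Real.log_neg hp1 (by linarith)
    have hent := entropy_ge ph hph hlt
    refine ⟨?_, ?_, ?_, ?_⟩
    · rw [hval]
      nlinarith [mul_pos hph1 (neg_pos.mpr hlogp1)]
    · rw [hval]
      nlinarith [mul_pos hph (neg_pos.mpr hlogph), mul_pos hph1 (neg_pos.mpr hlogr)]
    · intro _
      rw [hval]
      nlinarith [mul_pos hph (neg_pos.mpr hlogph), mul_pos hph1 (neg_pos.mpr hlogr)]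
    · intro h; exact absurd h hlt.ne
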